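/- Let p be an odd prime, let r be an integer with p ∤ r, and let s ∈ {1, −1}. Then the sum of the Legendre symbols ((r² − 4d)/p) over all d ∈ {1, …, p−1} with (d/p) = s equals −(1 + s·((−1)/p))/2. -/

import Mathlib

open Finset

section aux
variable (p : ℕ) [Fact p.Prime]

lemma four_ne_zero_zmod (hp : p ≠ 2) : (4 : ZMod p) ≠ 0 := by
  intro h
  have h4 : (p : ℕ) ∣ 4 := (ZMod.natCast_eq_zero_iff 4 p).mp (by exact_mod_cast h)
  have hpp := (Fact.out : p.Prime)
  have h2 : p ∣ 2 := (Nat.Prime.dvd_of_dvd_pow (n := 2) hpp (by norm_num [h4] : p ∣ 2 ^ 2))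
  exact hp ((Nat.prime_dvd_prime_iff_eq hpp Nat.prime_two).mp h2)

lemma sum_Icc_eq_sum_zmod (f : ZMod p → ℤ) :
    ∑ d ∈ Finset.Icc (1 : ℤ) ((p : ℤ) - 1), f (d : ZMod p)
      = ∑ a ∈ Finset.univ \ {(0 : ZMod p)}, f a := by
  have hp0 : 0 < p := (Fact.out : p.Prime).pos
  have : NeZero p := ⟨hp0.ne'⟩
  refine Finset.sum_nbij' (fun d => (d : ZMod p)) (fun a => (a.val : ℤ)) ?_ ?_ ?_ ?_ ?_
  · intro d hd
    simp only [Finset.mem_Icc] at hd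
    simp only [Finset.mem_sdiff, Finset.mem_univ, Finset.mem_singleton, true_and]
    intro h0
    have hdvd : (p : ℤ) ∣ d := (ZMod.intCast_zmod_eq_zero_iff_dvd d p).mp h0
    have := Int.le_of_dvd (by linarith) hdvd
    linarith
  · intro a ha
    simp only [Finset.mem_sdiff, Finset.mem_univ, Finset.mem_singleton, true_and] at ha
    have h1 : a.val ≠ 0 := fun h => ha (by rwa [← ZMod.val_eq_zero])
    have h2 : a.val < p := ZMod.val_lt a
    simp only [Finset.mem_Icc]
    constructor
    · exact_mod_cast Nat.one_le_iff_ne_zero.mpr h1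
    · omega
  · intro d hd
    simp only [Finset.mem_Icc] at hd
    show ((d : ZMod p).val : ℤ) = d
    rw [ZMod.val_intCast]
    exact Int.emod_eq_of_lt (by linarith) (by linarith)
  · intro a ha
    show ((a.val : ℤ) : ZMod p) = a
    push_cast
    simp [ZMod.natCast_val, ZMod.cast_id]
  · intro d hd
    rfl
end aux


section sums
variable (p : ℕ) [Fact p.Prime]

lemma sumA (hp : p ≠ 2) {ρ : ZMod p} (hρ : ρ ≠ 0) :
    ∑ a ∈ Finset.univ \ {(0 : ZMod p)}, quadraticChar (ZMod p) (ρ ^ 2 - 4 * a) = -1 := by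
  have hF2 : ringChar (ZMod p) ≠ 2 := by rw [ZMod.ringChar_zmod_n]; exact hp
  have h4 := four_ne_zero_zmod p hp
  have htot : ∑ a : ZMod p, quadraticChar (ZMod p) (ρ ^ 2 - 4 * a) = 0 := by
    calc ∑ a : ZMod p, quadraticChar (ZMod p) (ρ ^ 2 - 4 * a)
        = ∑ a : ZMod p, quadraticChar (ZMod p)
            (((Equiv.mulLeft₀ (4 : ZMod p) h4).trans (Equiv.subLeft (ρ ^ 2))) a) := by
          simp [Equiv.subLeft_apply]
      _ = ∑ b : ZMod p, quadraticChar (ZMod p) b := Equiv.sum_comp _ _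
      _ = 0 := quadraticChar_sum_zero hF2
  rw [Finset.sum_sdiff_eq_sub (Finset.subset_univ _), htot, Finset.sum_singleton,
    mul_zero, sub_zero, quadraticChar_sq_one' hρ]
  norm_num

lemma sumB (hp : p ≠ 2) {ρ : ZMod p} (hρ : ρ ≠ 0) :
    ∑ a ∈ Finset.univ \ {(0 : ZMod p)},
      quadraticChar (ZMod p) a * quadraticChar (ZMod p) (ρ ^ 2 - 4 * a)
      = -(quadraticChar (ZMod p) (-1)) := by
  have hF2 : ringChar (ZMod p) ≠ 2 := by rw [ZMod.ringChar_zmod_n]; exact hp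
  have h4 := four_ne_zero_zmod p hp
  have h2 : (2 : ZMod p) ≠ 0 := by
    intro h; apply h4; have h42 : (4 : ZMod p) = 2 * 2 := by norm_num
    rw [h42, h, mul_zero]
  have hc : ρ ^ 2 * (4 : ZMod p)⁻¹ ≠ 0 := mul_ne_zero (pow_ne_zero 2 hρ) (inv_ne_zero h4)
  have hχ4 : quadraticChar (ZMod p) ((4 : ZMod p)⁻¹) = 1 := by
    have h24 : ((4 : ZMod p))⁻¹ = ((2 : ZMod p)⁻¹) ^ 2 := by rw [inv_pow]; norm_num
    rw [h24, quadraticChar_sq_one' (inv_ne_zero h2)]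
  have hext : ∑ a ∈ Finset.univ \ {(0 : ZMod p)},
        quadraticChar (ZMod p) a * quadraticChar (ZMod p) (ρ ^ 2 - 4 * a)
      = ∑ a : ZMod p, quadraticChar (ZMod p) a * quadraticChar (ZMod p) (ρ ^ 2 - 4 * a) := by
    rw [Finset.sum_sdiff_eq_sub (Finset.subset_univ _), Finset.sum_singleton,
      MulChar.map_zero, zero_mul, sub_zero]
  rw [hext, ← Equiv.sum_comp (Equiv.mulLeft₀ (ρ ^ 2 * (4 : ZMod p)⁻¹) hc)
    (fun a => quadraticChar (ZMod p) a * quadraticChar (ZMod p) (ρ ^ 2 - 4 * a))]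
  have key : ∀ x : ZMod p,
      quadraticChar (ZMod p) ((Equiv.mulLeft₀ (ρ ^ 2 * (4 : ZMod p)⁻¹) hc) x) *
        quadraticChar (ZMod p) (ρ ^ 2 - 4 * ((Equiv.mulLeft₀ (ρ ^ 2 * (4 : ZMod p)⁻¹) hc) x))
      = quadraticChar (ZMod p) x * quadraticChar (ZMod p) (1 - x) := by
    intro x
    rw [Equiv.mulLeft₀_apply]
    have h1 : ρ ^ 2 - 4 * (ρ ^ 2 * (4 : ZMod p)⁻¹ * x) = ρ ^ 2 * (1 - x) := by
      field_simp
    rw [h1, map_mul, map_mul, map_mul, quadraticChar_sq_one' hρ, hχ4]; ring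
  simp only [key]
  have hJ : ∑ x : ZMod p,
      quadraticChar (ZMod p) x * quadraticChar (ZMod p) (1 - x)
      = jacobiSum (quadraticChar (ZMod p)) (quadraticChar (ZMod p)) := rfl
  rw [hJ]
  nth_rewrite 2 [← (quadraticChar_isQuadratic (ZMod p)).inv]
  exact jacobiSum_nontrivial_inv (quadraticChar_ne_one hF2)

end sums

theorem sum_legendre_r_sq_sub_four_d (p : ℕ) [Fact p.Prime] (hp : p ≠ 2)
    (r : ℤ) (hr : ¬ (p : ℤ) ∣ r) (s : ℤ) (hs : s = 1 ∨ s = -1) :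
    ((∑ d ∈ (Finset.Icc (1 : ℤ) ((p : ℤ) - 1)).filter
        (fun d => legendreSym p d = s), legendreSym p (r ^ 2 - 4 * d) : ℤ) : ℚ)
      = -((1 : ℚ) + s * legendreSym p (-1)) / 2 := by
  have hp0 : 0 < p := (Fact.out : p.Prime).pos
  have : NeZero p := ⟨hp0.ne'⟩
  have hρ : ((r : ZMod p)) ≠ 0 := fun h => hr ((ZMod.intCast_zmod_eq_zero_iff_dvd r p).mp h)
  set S : ℤ := ∑ d ∈ (Finset.Icc (1 : ℤ) ((p : ℤ) - 1)).filter
      (fun d => legendreSym p d = s), legendreSym p (r ^ 2 - 4 * d) with hS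
  -- step 1: 2 * S = ∑ over Icc of (1 + s * L d) * L (r² - 4d)
  have key : 2 * S = ∑ d ∈ Finset.Icc (1 : ℤ) ((p : ℤ) - 1),
      (1 + s * legendreSym p d) * legendreSym p (r ^ 2 - 4 * d) := by
    rw [hS, Finset.mul_sum, Finset.sum_filter]
    apply Finset.sum_congr rfl
    intro d hd
    simp only [Finset.mem_Icc] at hd
    have hd0 : ((d : ZMod p)) ≠ 0 := by
      intro h0
      have hdvd : (p : ℤ) ∣ d := (ZMod.intCast_zmod_eq_zero_iff_dvd d p).mp h0
      have := Int.le_of_dvd (by linarith) hdvd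
      linarith
    by_cases h : legendreSym p d = s
    · rw [if_pos h, h]
      have : (1 : ℤ) + s * s = 2 := by rcases hs with rfl | rfl <;> norm_num
      rw [this]
    · rw [if_neg h]
      have hsq : legendreSym p d ^ 2 = 1 := legendreSym.sq_one p hd0
      have hdich : legendreSym p d = 1 ∨ legendreSym p d = -1 :=
        sq_eq_one_iff.mp hsq
      have hz : (1 : ℤ) + s * legendreSym p d = 0 := by
        rcases hs with rfl | rfl <;> rcases hdich with h1 | h1 <;>
          first | exact absurd h1 h | norm_num [h1]
      rw [hz, zero_mul]
  -- step 2: expand and evaluate the two sums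
  have hcast1 : ∀ d : ℤ, legendreSym p (r ^ 2 - 4 * d)
      = quadraticChar (ZMod p) ((r : ZMod p) ^ 2 - 4 * (d : ZMod p)) := by
    intro d
    show quadraticChar (ZMod p) ((r ^ 2 - 4 * d : ℤ) : ZMod p) = _
    congr 1
    push_cast
    ring
  have hcast2 : ∀ d : ℤ, legendreSym p d = quadraticChar (ZMod p) ((d : ZMod p)) :=
    fun d => rfl
  have hA : ∑ d ∈ Finset.Icc (1 : ℤ) ((p : ℤ) - 1), legendreSym p (r ^ 2 - 4 * d) = -1 := by
    simp_rw [hcast1]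
    rw [sum_Icc_eq_sum_zmod p (fun a => quadraticChar (ZMod p) ((r : ZMod p) ^ 2 - 4 * a))]
    exact sumA p hp hρ
  have hB : ∑ d ∈ Finset.Icc (1 : ℤ) ((p : ℤ) - 1),
      legendreSym p d * legendreSym p (r ^ 2 - 4 * d)
      = -(legendreSym p (-1)) := by
    simp_rw [hcast1, hcast2]
    rw [sum_Icc_eq_sum_zmod p (fun a => quadraticChar (ZMod p) a *
      quadraticChar (ZMod p) ((r : ZMod p) ^ 2 - 4 * a))]
    rw [sumB p hp hρ]
    congr 1
    show _ = quadraticChar (ZMod p) ((-1 : ℤ) : ZMod p)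
    norm_num
  have h2S : 2 * S = -1 - s * legendreSym p (-1) := by
    rw [key]
    have : ∀ d : ℤ, (1 + s * legendreSym p d) * legendreSym p (r ^ 2 - 4 * d)
        = legendreSym p (r ^ 2 - 4 * d)
          + s * (legendreSym p d * legendreSym p (r ^ 2 - 4 * d)) := by intro d; ring
    simp_rw [this]
    rw [Finset.sum_add_distrib, ← Finset.mul_sum, hA, hB]
    ring
  have hq : ((2 * S : ℤ) : ℚ) = ((-1 - s * legendreSym p (-1) : ℤ) : ℚ) := by
    exact_mod_cast h2S
  push_cast at hq
  linarith
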